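/- Let ū=(u_1,…,u_n) and v̄=(v_1,…,v_n) be tuples of complex numbers, all generic so that every denominator below is nonzero. Writing K_c for the DWPF built from the constant c, the following identities hold: (i) K_c(ū−c|v̄) = K_c(ū|v̄+c) = (−1)^n · K_c(v̄|ū) / f(v̄,ū), where ū±c denotes the tuple with every element shifted by ±c; (ii) K_{−c}(ū|v̄) = K_c(v̄|ū), i.e. replacing c by −c in K interchanges the two argument tuples. -/

import Mathlib

open scoped BigOperators

/-- The rational function `g(x,y) = c/(x-y)`. -/
noncomputable def gG (c x y : ℂ) : ℂ := c / (x - y)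

/-- The rational function `f(x,y) = (x-y+c)/(x-y)`. -/
noncomputable def fF (c x y : ℂ) : ℂ := (x - y + c) / (x - y)

/-- The rational function `h(x,y) = (x-y+c)/c`. -/
noncomputable def hH (c x y : ℂ) : ℂ := (x - y + c) / c

/-- A two-argument function applied to tuples denotes the product over all elements. -/
noncomputable def pF (F : ℂ → ℂ → ℂ) (U V : List ℂ) : ℂ :=
  (U.map fun x => (V.map fun y => F x y).prod).prod

/-- The domain-wall partition function `K(ū|v̄) = Δ'(ū)·Δ(v̄)·h(ū,v̄)·det(g(u_j,v_k)/h(u_j,v_k))`,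
written in the equivalent (rational-continuation) form in which the prefactor `h(ū,v̄)` is
distributed over the rows of the determinant:
`K(ū|v̄) = Δ'(ū)·Δ(v̄)·det( g(u_j,v_k)·∏_{k'≠k} h(u_j,v_{k'}) )`.
For tuples of equal length `n` with all denominators nonzero this coincides with the literal
formula, and `K(∅|∅) = 1`. -/
noncomputable def Kd (c : ℂ) (U V : List ℂ) : ℂ :=
  (∏ j : Fin U.length, ∏ k : Fin U.length,
      if (j : ℕ) < (k : ℕ) then gG c (U.get j) (U.get k) else 1) *
  (∏ j : Fin V.length, ∏ k : Fin V.length,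
      if (k : ℕ) < (j : ℕ) then gG c (V.get j) (V.get k) else 1) *
  Matrix.det (Matrix.of fun j k : Fin U.length =>
    gG c (U.get j) (V.getD (k : ℕ) 0) *
      ∏ k' : Fin U.length, if k' = k then 1 else hH c (U.get j) (V.getD (k' : ℕ) 0))

/-- The sub-tuple of a tuple `L` selected by a set `A` of positions (in increasing order). -/
noncomputable def subL (L : List ℂ) (A : Finset (Fin L.length)) : List ℂ :=
  (A.sort (· ≤ ·)).map L.get

/-- Genericity of a family of parameters: all members are pairwise distinct and no difference
of two members equals `±c`, so that every denominator occurring (also after shifts by `±c`)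
is nonzero. -/
def Generic (c : ℂ) (L : List ℂ) : Prop :=
  L.Pairwise fun x y => x ≠ y ∧ x - y ≠ c ∧ x - y ≠ -c

noncomputable def Kf (c : ℂ) {n : ℕ} (u v : Fin n → ℂ) : ℂ :=
  (∏ j : Fin n, ∏ k : Fin n, if (j : ℕ) < (k : ℕ) then gG c (u j) (u k) else 1) *
  (∏ j : Fin n, ∏ k : Fin n, if (k : ℕ) < (j : ℕ) then gG c (v j) (v k) else 1) *
  Matrix.det (Matrix.of fun j k : Fin n =>
    gG c (u j) (v k) * ∏ k' : Fin n, if k' = k then 1 else hH c (u j) (v k'))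

lemma prod_map_fin (G : ℂ → ℂ) : ∀ (L : List ℂ), (L.map G).prod = ∏ i : Fin L.length, G (L.get i)
  | [] => by simp
  | a :: L => by
    rw [List.map_cons, List.prod_cons, prod_map_fin G L]
    show _ = ∏ i : Fin (L.length + 1), G ((a :: L).get i)
    rw [Fin.prod_univ_succ]
    rfl

lemma pF_fin (F : ℂ → ℂ → ℂ) (L M : List ℂ) :
    (L.map fun x => (M.map fun y => F x y).prod).prod
      = ∏ j : Fin L.length, ∏ k : Fin M.length, F (L.get j) (M.get k) := by
  rw [prod_map_fin]
  exact Finset.prod_congr rfl fun j _ => prod_map_fin _ M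

lemma prod2_cast {m n m' n' : ℕ} (h : m = n) (h' : m' = n')
    (f : Fin m → Fin m' → ℂ) (g : Fin n → Fin n' → ℂ)
    (hfg : ∀ j k, f j k = g (Fin.cast h j) (Fin.cast h' k)) :
    ∏ j, ∏ k, f j k = ∏ j, ∏ k, g j k := by
  subst h; subst h'
  exact Finset.prod_congr rfl fun j _ => Finset.prod_congr rfl fun k _ => hfg j k

lemma det_cast {m n : ℕ} (h : m = n) (f : Fin m → Fin m → ℂ) (g : Fin n → Fin n → ℂ)
    (hfg : ∀ j k, f j k = g (Fin.cast h j) (Fin.cast h k)) :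
    Matrix.det (Matrix.of f) = Matrix.det (Matrix.of g) := by
  subst h; congr 1; ext j k; exact hfg j k

lemma detM_factor {n : ℕ} (g h : Fin n → Fin n → ℂ) (hnz : ∀ j k, h j k ≠ 0) :
    Matrix.det (Matrix.of fun j k => g j k * ∏ k', if k' = k then 1 else h j k') =
    (∏ j : Fin n, ∏ k : Fin n, h j k) * Matrix.det (Matrix.of fun j k => g j k / h j k) := by
  have key : ∀ j k, g j k * (∏ k', if k' = k then 1 else h j k')
      = (∏ k' : Fin n, h j k') * (g j k / h j k) := by
    intro j k
    have e1 : (∏ k' : Fin n, if k' = k then 1 else h j k') = ∏ k' ∈ Finset.univ.erase k, h j k' := by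
      rw [← Finset.prod_erase_mul Finset.univ (fun k' => if k' = k then 1 else h j k')
        (Finset.mem_univ k)]
      simp only [eq_self_iff_true, if_true, mul_one]
      refine Finset.prod_congr rfl fun x hx => ?_
      exact if_neg (Finset.ne_of_mem_erase hx)
    have e2 : (∏ k' : Fin n, h j k') = h j k * ∏ k' ∈ Finset.univ.erase k, h j k' :=
      (Finset.mul_prod_erase _ _ (Finset.mem_univ k)).symm
    rw [e1, e2]
    field_simp [hnz j k]
  calc Matrix.det (Matrix.of fun j k => g j k * ∏ k', if k' = k then 1 else h j k')
      = Matrix.det (Matrix.of fun j k =>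
          (∏ k' : Fin n, h j k') * (Matrix.of fun j k => g j k / h j k) j k) := by
        congr 1; ext j k; simpa using key j k
    _ = (∏ j : Fin n, ∏ k : Fin n, h j k) * Matrix.det (Matrix.of fun j k => g j k / h j k) :=
        Matrix.det_mul_column _ _

lemma gG_anti (c x y : ℂ) : gG c x y = -gG c y x := by
  rw [gG, gG, ← div_neg, neg_sub]

lemma gG_neg (c x y : ℂ) : gG (-c) x y = gG c y x := by
  rw [gG, gG, ← neg_sub x y, div_neg, neg_div]

lemma gG_shift (c x y : ℂ) : gG c (x - c) (y - c) = gG c x y := by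
  rw [gG, gG, sub_sub_sub_cancel_right]

lemma gG_shift' (c x y : ℂ) : gG c (x + c) (y + c) = gG c x y := by
  rw [gG, gG, add_sub_add_right_eq_sub]

lemma hH_neg (c x y : ℂ) : hH (-c) x y = hH c y x := by
  rw [hH, hH, div_neg, ← neg_div]
  ring_nf

lemma hH_shift (c x y : ℂ) : hH c x (y + c) = hH c (x - c) y := by
  rw [hH, hH]
  ring_nf

lemma scalarE (c x y : ℂ) (hc : c ≠ 0) (h0 : x - y ≠ 0) (h2 : x - y ≠ c) :
    gG c (x - c) y / hH c (x - c) y = gG c y x / hH c y x := by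
  have d1 : x - c - y ≠ 0 := fun h => h2 (by linear_combination h)
  have d2 : x - c - y + c ≠ 0 := fun h => h0 (by linear_combination h)
  have d3 : y - x ≠ 0 := fun h => h0 (by linear_combination -h)
  have d4 : y - x + c ≠ 0 := fun h => h2 (by linear_combination -h)
  rw [gG, gG, hH, hH]
  field_simp
  ring

lemma scalarE3 (c x y : ℂ) (hc : c ≠ 0) (h0 : x - y ≠ 0) (h2 : x - y ≠ c) :
    gG (-c) x y / hH (-c) x y = gG c y x / hH c y x := by
  rw [gG_neg, hH_neg]

lemma scalarH (c x y : ℂ) (hc : c ≠ 0) (h0 : y - x ≠ 0) :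
    hH c (x - c) y * fF c y x = -1 * hH c y x := by
  rw [hH, hH, fF]
  field_simp
  ring

lemma swap_prod {n : ℕ} (G : Fin n → Fin n → ℂ) :
    (∏ j : Fin n, ∏ k : Fin n, if (j : ℕ) < (k : ℕ) then G k j else 1) =
    ∏ j : Fin n, ∏ k : Fin n, if (k : ℕ) < (j : ℕ) then G j k else 1 :=
  Finset.prod_comm

lemma A_eq_s_mul_B (c : ℂ) {n : ℕ} (w : Fin n → ℂ) :
    (∏ j : Fin n, ∏ k : Fin n, if (j : ℕ) < (k : ℕ) then gG c (w j) (w k) else 1)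
    = (∏ j : Fin n, ∏ k : Fin n, if (j : ℕ) < (k : ℕ) then (-1 : ℂ) else 1) *
      (∏ j : Fin n, ∏ k : Fin n, if (k : ℕ) < (j : ℕ) then gG c (w j) (w k) else 1) := by
  rw [← swap_prod (fun j k => gG c (w j) (w k)), ← Finset.prod_mul_distrib]
  refine Finset.prod_congr rfl fun j _ => ?_
  rw [← Finset.prod_mul_distrib]
  refine Finset.prod_congr rfl fun k _ => ?_
  by_cases hjk : (j : ℕ) < (k : ℕ)
  · simp only [if_pos hjk]
    rw [gG_anti]
    ring
  · simp [hjk]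

lemma neg_one_pow_sq (n : ℕ) : ((-1 : ℂ)) ^ (n * n) = (-1 : ℂ) ^ n := by
  rcases Nat.even_or_odd n with h | h
  · rw [(h.mul_right n).neg_one_pow, h.neg_one_pow]
  · rw [(h.mul h).neg_one_pow, h.neg_one_pow]

lemma assemble (S Bu Bv D H1 H2 F sgn : ℂ) (hF : F ≠ 0) (hkey : H1 * F = sgn * H2) :
    (S * Bu) * Bv * (H1 * D) = sgn * ((S * Bv) * Bu * (H2 * D)) / F := by
  rw [eq_div_iff hF]
  linear_combination S * Bu * Bv * D * hkey

theorem Kf_core (c : ℂ) (hc : c ≠ 0) {n : ℕ} (u v : Fin n → ℂ)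
    (h1 : ∀ j k, u j - v k ≠ 0) (h2 : ∀ j k, u j - v k ≠ c) (h3 : ∀ j k, u j - v k ≠ -c) :
    Kf c (fun j => u j - c) v =
      (-1 : ℂ) ^ n * Kf c v u / (∏ j : Fin n, ∏ k : Fin n, fF c (v j) (u k)) ∧
    Kf c u (fun k => v k + c) =
      (-1 : ℂ) ^ n * Kf c v u / (∏ j : Fin n, ∏ k : Fin n, fF c (v j) (u k)) ∧
    Kf (-c) u v = Kf c v u := by
  -- nonzeroness
  have hvu : ∀ j k, v j - u k ≠ 0 := fun j k h => h1 k j (by linear_combination -h)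
  have hvuc : ∀ j k, v j - u k + c ≠ 0 := fun j k h => h2 k j (by linear_combination -h)
  have hh2 : ∀ j k, hH c (v j) (u k) ≠ 0 := fun j k => by
    rw [hH]; exact div_ne_zero (hvuc j k) hc
  have hh1 : ∀ j k, hH c (u j - c) (v k) ≠ 0 := fun j k => by
    rw [hH]; exact div_ne_zero (fun h => h1 j k (by linear_combination h)) hc
  have hh4 : ∀ j k, hH (-c) (u j) (v k) ≠ 0 := fun j k => by
    rw [hH]; exact div_ne_zero (fun h => h2 j k (by linear_combination h)) (neg_ne_zero.mpr hc)
  have hF : (∏ j : Fin n, ∏ k : Fin n, fF c (v j) (u k)) ≠ 0 := by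
    rw [Finset.prod_ne_zero_iff]
    intro j _
    rw [Finset.prod_ne_zero_iff]
    intro k _
    rw [fF]; exact div_ne_zero (hvuc j k) (hvu j k)
  -- determinant factorizations
  have fact2 : Matrix.det (Matrix.of fun j k : Fin n =>
        gG c (v j) (u k) * ∏ k' : Fin n, if k' = k then 1 else hH c (v j) (u k')) =
      (∏ j : Fin n, ∏ k : Fin n, hH c (v j) (u k)) *
        Matrix.det (Matrix.of fun j k : Fin n => gG c (v j) (u k) / hH c (v j) (u k)) :=
    detM_factor _ _ hh2
  have fact1 : Matrix.det (Matrix.of fun j k : Fin n =>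
        gG c (u j - c) (v k) * ∏ k' : Fin n, if k' = k then 1 else hH c (u j - c) (v k')) =
      (∏ j : Fin n, ∏ k : Fin n, hH c (u j - c) (v k)) *
        Matrix.det (Matrix.of fun j k : Fin n => gG c (u j - c) (v k) / hH c (u j - c) (v k)) :=
    detM_factor _ _ hh1
  have fact3 : Matrix.det (Matrix.of fun j k : Fin n =>
        gG c (u j) (v k + c) * ∏ k' : Fin n, if k' = k then 1 else hH c (u j) (v k' + c)) =
      (∏ j : Fin n, ∏ k : Fin n, hH c (u j) (v k + c)) *
        Matrix.det (Matrix.of fun j k : Fin n => gG c (u j) (v k + c) / hH c (u j) (v k + c)) :=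
    detM_factor _ _ (fun j k => by rw [hH_shift]; exact hh1 j k)
  have fact4 : Matrix.det (Matrix.of fun j k : Fin n =>
        gG (-c) (u j) (v k) * ∏ k' : Fin n, if k' = k then 1 else hH (-c) (u j) (v k')) =
      (∏ j : Fin n, ∏ k : Fin n, hH (-c) (u j) (v k)) *
        Matrix.det (Matrix.of fun j k : Fin n => gG (-c) (u j) (v k) / hH (-c) (u j) (v k)) :=
    detM_factor _ _ hh4
  -- transposes
  have trans1 : (Matrix.of fun j k : Fin n => gG c (u j - c) (v k) / hH c (u j - c) (v k)) =
      Matrix.transpose (Matrix.of fun j k : Fin n => gG c (v j) (u k) / hH c (v j) (u k)) := by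
    refine Matrix.ext fun j k => ?_
    show gG c (u j - c) (v k) / hH c (u j - c) (v k) = gG c (v k) (u j) / hH c (v k) (u j)
    exact scalarE c (u j) (v k) hc (h1 j k) (h2 j k)
  have trans3 : (Matrix.of fun j k : Fin n => gG c (u j) (v k + c) / hH c (u j) (v k + c)) =
      Matrix.transpose (Matrix.of fun j k : Fin n => gG c (v j) (u k) / hH c (v j) (u k)) := by
    refine Matrix.ext fun j k => ?_
    show gG c (u j) (v k + c) / hH c (u j) (v k + c) = gG c (v k) (u j) / hH c (v k) (u j)
    have : gG c (u j) (v k + c) = gG c (u j - c) (v k) := by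
      rw [gG, gG]; ring_nf
    rw [this, hH_shift]
    exact scalarE c (u j) (v k) hc (h1 j k) (h2 j k)
  have trans4 : (Matrix.of fun j k : Fin n => gG (-c) (u j) (v k) / hH (-c) (u j) (v k)) =
      Matrix.transpose (Matrix.of fun j k : Fin n => gG c (v j) (u k) / hH c (v j) (u k)) := by
    refine Matrix.ext fun j k => ?_
    show gG (-c) (u j) (v k) / hH (-c) (u j) (v k) = gG c (v k) (u j) / hH c (v k) (u j)
    exact scalarE3 c (u j) (v k) hc (h1 j k) (h2 j k)
  rw [trans1, Matrix.det_transpose] at fact1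
  rw [trans3, Matrix.det_transpose] at fact3
  rw [trans4, Matrix.det_transpose] at fact4
  -- prefactor rewrites
  have hAu : (∏ j : Fin n, ∏ k : Fin n, if (j : ℕ) < (k : ℕ)
        then gG c (u j - c) (u k - c) else 1)
      = ∏ j : Fin n, ∏ k : Fin n, if (j : ℕ) < (k : ℕ) then gG c (u j) (u k) else 1 := by
    refine Finset.prod_congr rfl fun j _ => Finset.prod_congr rfl fun k _ => ?_
    rw [gG_shift]
  have hBv : (∏ j : Fin n, ∏ k : Fin n, if (k : ℕ) < (j : ℕ)
        then gG c (v j + c) (v k + c) else 1)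
      = ∏ j : Fin n, ∏ k : Fin n, if (k : ℕ) < (j : ℕ) then gG c (v j) (v k) else 1 := by
    refine Finset.prod_congr rfl fun j _ => Finset.prod_congr rfl fun k _ => ?_
    rw [gG_shift']
  -- H identities
  have hH3 : (∏ j : Fin n, ∏ k : Fin n, hH c (u j) (v k + c))
      = ∏ j : Fin n, ∏ k : Fin n, hH c (u j - c) (v k) :=
    Finset.prod_congr rfl fun j _ => Finset.prod_congr rfl fun k _ => hH_shift c (u j) (v k)
  have hH4 : (∏ j : Fin n, ∏ k : Fin n, hH (-c) (u j) (v k))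
      = ∏ j : Fin n, ∏ k : Fin n, hH c (v j) (u k) := by
    rw [Finset.prod_comm]
    exact Finset.prod_congr rfl fun j _ => Finset.prod_congr rfl fun k _ => hH_neg c (u k) (v j)
  -- key product identity
  have HKey : (∏ j : Fin n, ∏ k : Fin n, hH c (u j - c) (v k)) *
        (∏ j : Fin n, ∏ k : Fin n, fF c (v j) (u k))
      = (-1 : ℂ) ^ n * ∏ j : Fin n, ∏ k : Fin n, hH c (v j) (u k) := by
    have hswap : (∏ j : Fin n, ∏ k : Fin n, hH c (u j - c) (v k))
        = ∏ j : Fin n, ∏ k : Fin n, hH c (u k - c) (v j) := Finset.prod_comm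
    rw [hswap, ← Finset.prod_mul_distrib]
    have : ∀ j : Fin n, (∏ k : Fin n, hH c (u k - c) (v j)) *
          (∏ k : Fin n, fF c (v j) (u k))
        = ∏ k : Fin n, ((-1 : ℂ) * hH c (v j) (u k)) := by
      intro j
      rw [← Finset.prod_mul_distrib]
      exact Finset.prod_congr rfl fun k _ => scalarH c (u k) (v j) hc (hvu j k)
    calc (∏ j : Fin n, ((∏ k : Fin n, hH c (u k - c) (v j)) *
            ∏ k : Fin n, fF c (v j) (u k)))
        = ∏ j : Fin n, ∏ k : Fin n, ((-1 : ℂ) * hH c (v j) (u k)) :=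
          Finset.prod_congr rfl fun j _ => this j
      _ = (-1 : ℂ) ^ n * ∏ j : Fin n, ∏ k : Fin n, hH c (v j) (u k) := by
          simp only [Finset.prod_mul_distrib, Finset.prod_const, Finset.card_univ,
            Fintype.card_fin]
          rw [← pow_mul, neg_one_pow_sq]
  refine ⟨?_, ?_, ?_⟩
  · unfold Kf
    rw [hAu, fact1, fact2, A_eq_s_mul_B c u, A_eq_s_mul_B c v]
    exact assemble _ _ _ _ _ _ _ _ hF HKey
  · unfold Kf
    rw [hBv, fact3, fact2, A_eq_s_mul_B c u, A_eq_s_mul_B c v, hH3]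
    exact assemble _ _ _ _ _ _ _ _ hF HKey
  · unfold Kf
    rw [fact4, fact2, hH4]
    have pu : (∏ j : Fin n, ∏ k : Fin n, if (j : ℕ) < (k : ℕ)
          then gG (-c) (u j) (u k) else 1)
        = ∏ j : Fin n, ∏ k : Fin n, if (k : ℕ) < (j : ℕ) then gG c (u j) (u k) else 1 := by
      rw [← swap_prod (fun j k => gG c (u j) (u k))]
      exact Finset.prod_congr rfl fun j _ => Finset.prod_congr rfl fun k _ => by
        by_cases hjk : (j : ℕ) < (k : ℕ) <;> simp [hjk, gG_neg]
    have pv : (∏ j : Fin n, ∏ k : Fin n, if (k : ℕ) < (j : ℕ)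
          then gG (-c) (v j) (v k) else 1)
        = ∏ j : Fin n, ∏ k : Fin n, if (j : ℕ) < (k : ℕ) then gG c (v j) (v k) else 1 := by
      have step : (∏ j : Fin n, ∏ k : Fin n, if (k : ℕ) < (j : ℕ)
            then gG (-c) (v j) (v k) else 1)
          = ∏ j : Fin n, ∏ k : Fin n, if (k : ℕ) < (j : ℕ) then gG c (v k) (v j) else 1 :=
        Finset.prod_congr rfl fun j _ => Finset.prod_congr rfl fun k _ => by
          by_cases hjk : (k : ℕ) < (j : ℕ) <;> simp [hjk, gG_neg]
      rw [step, ← swap_prod (fun a b => gG c (v b) (v a))]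
    rw [pu, pv]
    ring

lemma pF_eq_fin (F : ℂ → ℂ → ℂ) (L M : List ℂ) :
    pF F L M = ∏ j : Fin L.length, ∏ k : Fin M.length, F (L.get j) (M.get k) :=
  pF_fin F L M

lemma Kd_eq_Kf (c : ℂ) {n : ℕ} (U V : List ℂ) (hU : U.length = n) (hV : V.length = n) :
    Kd c U V = Kf c (fun j : Fin n => U.get (Fin.cast hU.symm j))
      (fun k : Fin n => V.get (Fin.cast hV.symm k)) := by
  have hget : ∀ k : Fin U.length,
      V.getD (k : ℕ) 0 = V.get (Fin.cast hV.symm (Fin.cast hU k)) := by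
    intro k
    rw [List.getD_eq_getElem V 0 (by omega : (k : ℕ) < V.length)]
    exact Eq.symm List.get_eq_getElem
  unfold Kd Kf
  congr 1
  · congr 1
    · exact prod2_cast hU hU _ _ (fun j k => rfl)
    · exact prod2_cast hV hV _ _ (fun j k => rfl)
  · refine det_cast hU _ _ (fun j k => ?_)
    rw [hget k]
    congr 1
    refine Fintype.prod_equiv (finCongr hU) _ _ fun k' => ?_
    rw [hget k']
    refine if_congr ?_ rfl rfl
    constructor
    · intro h; rw [h]; rfl
    · intro h
      have := congrArg (fun x : Fin n => (x : ℕ)) h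
      exact Fin.ext (by simpa using this)

/-- second and third lines of eq. (A.2):
(i) `K_c(ū−c|v̄) = K_c(ū|v̄+c) = (−1)^n·K_c(v̄|ū)/f(v̄,ū)`;
(ii) `K_{−c}(ū|v̄) = K_c(v̄|ū)`. -/
theorem stmt6 (c : ℂ) (hc : c ≠ 0) (n : ℕ) (U V : List ℂ)
    (hU : U.length = n) (hV : V.length = n)
    (hgen : Generic c (U ++ V)) :
    Kd c (U.map (· - c)) V = (-1 : ℂ) ^ n * Kd c V U / pF (fF c) V U ∧
    Kd c U (V.map (· + c)) = (-1 : ℂ) ^ n * Kd c V U / pF (fF c) V U ∧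
    Kd (-c) U V = Kd c V U := by
  have hU' : (U.map (· - c)).length = n := by simpa using hU
  have hV' : (V.map (· + c)).length = n := by simpa using hV
  obtain ⟨-, -, hUV⟩ := List.pairwise_append.mp hgen
  have hmem : ∀ (j k : Fin n),
      U.get (Fin.cast hU.symm j) ≠ V.get (Fin.cast hV.symm k) ∧
      U.get (Fin.cast hU.symm j) - V.get (Fin.cast hV.symm k) ≠ c ∧
      U.get (Fin.cast hU.symm j) - V.get (Fin.cast hV.symm k) ≠ -c := fun j k =>
    hUV _ (List.get_mem U (Fin.cast hU.symm j))
      _ (List.get_mem V (Fin.cast hV.symm k))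
  have h1 : ∀ j k : Fin n,
      U.get (Fin.cast hU.symm j) - V.get (Fin.cast hV.symm k) ≠ 0 := fun j k =>
    sub_ne_zero.mpr (hmem j k).1
  obtain ⟨c1, c2, c3⟩ := Kf_core c hc (fun j : Fin n => U.get (Fin.cast hU.symm j))
    (fun k : Fin n => V.get (Fin.cast hV.symm k)) h1
    (fun j k => (hmem j k).2.1) (fun j k => (hmem j k).2.2)
  have e1 : Kd c (U.map (· - c)) V =
      Kf c (fun j : Fin n => U.get (Fin.cast hU.symm j) - c)
        (fun k : Fin n => V.get (Fin.cast hV.symm k)) := by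
    rw [Kd_eq_Kf c _ V hU' hV]
    have : (fun j : Fin n => (U.map (· - c)).get (Fin.cast hU'.symm j))
        = fun j : Fin n => U.get (Fin.cast hU.symm j) - c := by
      funext j
      simp [List.get_eq_getElem]
    rw [this]
  have e2 : Kd c U (V.map (· + c)) =
      Kf c (fun j : Fin n => U.get (Fin.cast hU.symm j))
        (fun k : Fin n => V.get (Fin.cast hV.symm k) + c) := by
    rw [Kd_eq_Kf c U _ hU hV']
    have : (fun k : Fin n => (V.map (· + c)).get (Fin.cast hV'.symm k))
        = fun k : Fin n => V.get (Fin.cast hV.symm k) + c := by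
      funext k
      simp [List.get_eq_getElem]
    rw [this]
  have e3 : Kd c V U = Kf c (fun j : Fin n => V.get (Fin.cast hV.symm j))
      (fun k : Fin n => U.get (Fin.cast hU.symm k)) := Kd_eq_Kf c V U hV hU
  have e4 : Kd (-c) U V = Kf (-c) (fun j : Fin n => U.get (Fin.cast hU.symm j))
      (fun k : Fin n => V.get (Fin.cast hV.symm k)) := Kd_eq_Kf (-c) U V hU hV
  have epF : pF (fF c) V U = ∏ j : Fin n, ∏ k : Fin n,
      fF c (V.get (Fin.cast hV.symm j)) (U.get (Fin.cast hU.symm k)) := by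
    rw [pF_eq_fin]
    exact prod2_cast hV hU _ _ (fun j k => rfl)
  exact ⟨by rw [e1, e3, epF]; exact c1, by rw [e2, e3, epF]; exact c2,
    by rw [e4, e3]; exact c3⟩
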